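/- Let α ∈ (0, 1), let q_lo, q_hi : ℝ^p → ℝ be measurable functions, and let (X_1, Y_1), …, (X_{m+1}, Y_{m+1}) be exchangeable random variables in ℝ^p × ℝ. Define the conformity scores E_i = max(q_lo(X_i) − Y_i, Y_i − q_hi(X_i)) for i = 1, …, m+1, and let Q_{1−α} denote the ⌈(1−α)(m+1)⌉-th smallest value among E_1, …, E_m (equal to +∞ if ⌈(1−α)(m+1)⌉ > m). Then P( q_lo(X_{m+1}) − Q_{1−α} ≤ Y_{m+1} ≤ q_hi(X_{m+1}) + Q_{1−α} ) ≥ 1 − α. -/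

import Mathlib

open MeasureTheory

/-- A finite family of random variables is exchangeable if its joint distribution is invariant
under every permutation of the indices. -/
def Exchangeable {Ω α : Type*} [MeasurableSpace Ω] [MeasurableSpace α]
    (μ : Measure Ω) {n : ℕ} (Z : Fin n → Ω → α) : Prop :=
  ∀ σ : Equiv.Perm (Fin n),
    Measure.map (fun ω (i : Fin n) => Z (σ i) ω) μ = Measure.map (fun ω (i : Fin n) => Z i ω) μ

/-- The `k`-th order statistic (the `k`-th smallest value, `1 ≤ k ≤ n`) of `w : Fin n → ℝ`,
viewed in the extended reals, with the convention that it equals `+∞` when `k - 1 ≥ n`. -/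
noncomputable def orderStatE {n : ℕ} (w : Fin n → ℝ) (k : ℕ) : EReal :=
  if h : k - 1 < n then ((w ∘ Tuple.sort w) ⟨k - 1, h⟩ : EReal) else ⊤

lemma card_filter_comp_perm {n : ℕ} (σ : Equiv.Perm (Fin n)) (p : Fin n → Prop)
    [DecidablePred p] :
    (Finset.univ.filter (fun i => p (σ i))).card = (Finset.univ.filter p).card := by
  simp only [Finset.card_filter]
  exact Fintype.sum_equiv σ _ _ (fun i => rfl)

lemma le_orderStatE_iff {n : ℕ} (w : Fin n → ℝ) (k : ℕ) (hk : 1 ≤ k) (c : ℝ) :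
    (c : EReal) ≤ orderStatE w k ↔ (Finset.univ.filter (fun i => w i < c)).card < k := by
  rw [orderStatE]
  split_ifs with h
  · rw [EReal.coe_le_coe_iff]
    have hmono := Tuple.monotone_sort w
    rw [← card_filter_comp_perm (Tuple.sort w) (fun i => w i < c)]
    constructor
    · intro hc
      have hsub : (Finset.univ.filter (fun i => w (Tuple.sort w i) < c)) ⊆
          Finset.Iio ⟨k - 1, h⟩ := by
        intro s hs
        simp only [Finset.mem_filter, Finset.mem_univ, true_and] at hs
        simp only [Finset.mem_Iio]
        by_contra hsk
        push_neg at hsk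
        have : (w ∘ Tuple.sort w) ⟨k - 1, h⟩ ≤ (w ∘ Tuple.sort w) s := hmono hsk
        simp only [Function.comp_apply] at this
        exact absurd (lt_of_le_of_lt (hc.trans this) hs) (lt_irrefl _)
      calc (Finset.univ.filter (fun i => w (Tuple.sort w i) < c)).card
          ≤ (Finset.Iio (⟨k - 1, h⟩ : Fin n)).card := Finset.card_le_card hsub
        _ = k - 1 := Fin.card_Iio _
        _ < k := Nat.sub_lt hk one_pos
    · intro hcard
      by_contra hc
      push_neg at hc
      have hsub : Finset.Iic (⟨k - 1, h⟩ : Fin n) ⊆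
          Finset.univ.filter (fun i => w (Tuple.sort w i) < c) := by
        intro s hs
        simp only [Finset.mem_Iic] at hs
        simp only [Finset.mem_filter, Finset.mem_univ, true_and]
        have : (w ∘ Tuple.sort w) s ≤ (w ∘ Tuple.sort w) ⟨k - 1, h⟩ := hmono hs
        exact lt_of_le_of_lt this hc
      have h2 := (Finset.card_le_card hsub).trans_lt hcard
      simp only [Fin.card_Iic] at h2
      omega
  · simp only [le_top, true_iff]
    push_neg at h
    calc (Finset.univ.filter (fun i => w i < c)).card
        ≤ (Finset.univ : Finset (Fin n)).card := Finset.card_le_card (Finset.filter_subset _ _)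
      _ = n := by simp
      _ < k := by omega

lemma count_small_rank {n : ℕ} (v : Fin n → ℝ) (k : ℕ) (hk : k ≤ n) :
    k ≤ (Finset.univ.filter
      (fun j => (Finset.univ.filter (fun i => v i < v j)).card < k)).card := by
  have hmono := Tuple.monotone_sort v
  set σ := Tuple.sort v
  have key : ∀ r : Fin n, (r : ℕ) < k →
      (Finset.univ.filter (fun i => v i < v (σ r))).card < k := by
    intro r hr
    rw [← card_filter_comp_perm σ (fun i => v i < v (σ r))]
    have hsub : Finset.univ.filter (fun s => v (σ s) < v (σ r)) ⊆ Finset.Iio r := by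
      intro s hs
      simp only [Finset.mem_filter, Finset.mem_univ, true_and] at hs
      simp only [Finset.mem_Iio]
      by_contra hsr
      push_neg at hsr
      exact absurd (lt_of_le_of_lt (hmono hsr) hs) (lt_irrefl _)
    calc (Finset.univ.filter (fun s => v (σ s) < v (σ r))).card
        ≤ (Finset.Iio r).card := Finset.card_le_card hsub
      _ = (r : ℕ) := Fin.card_Iio _
      _ < k := hr
  -- inject Fin k into the filter set via a ↦ σ ⟨a, _⟩
  have := Finset.card_le_card_of_injOn
    (f := fun a : Fin k => σ ⟨(a : ℕ), lt_of_lt_of_le a.2 hk⟩)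
    (s := Finset.univ)
    (t := Finset.univ.filter
      (fun j => (Finset.univ.filter (fun i => v i < v j)).card < k)) ?_ ?_
  · simpa using this
  · intro a _
    simp only [Finset.coe_filter, Set.mem_setOf_eq, Finset.mem_filter, Finset.mem_univ, true_and]
    exact key ⟨(a : ℕ), lt_of_lt_of_le a.2 hk⟩ a.2
  · intro a _ b _ hab
    have := σ.injective hab
    exact Fin.ext (by simpa using congrArg Fin.val this)

lemma ereal_sub_le_iff (a b : ℝ) (q : EReal) :
    (a : EReal) - q ≤ (b : EReal) ↔ ((a - b : ℝ) : EReal) ≤ q := by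
  induction q using EReal.rec with
  | bot => simp [← EReal.coe_sub]
  | coe x =>
    rw [show ((x : EReal)) = ((x : ℝ) : EReal) from rfl, ← EReal.coe_sub,
      EReal.coe_le_coe_iff, EReal.coe_le_coe_iff]
    constructor <;> intro <;> linarith
  | top => simp

lemma ereal_le_add_iff (a b : ℝ) (q : EReal) :
    (b : EReal) ≤ (a : EReal) + q ↔ ((b - a : ℝ) : EReal) ≤ q := by
  induction q using EReal.rec with
  | bot => simp [← EReal.coe_sub]
  | coe x =>
    rw [show ((x : EReal)) = ((x : ℝ) : EReal) from rfl, ← EReal.coe_add,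
      EReal.coe_le_coe_iff, EReal.coe_le_coe_iff]
    constructor <;> intro <;> linarith
  | top => simp



/-- Coverage lower bound of Theorem 1 (validity of CQR), conditional on the proper training
set: if the pairs `(X i, Y i)`, `i = 1, …, m+1`, are exchangeable, the conformity scores are
`E i = max (q_lo (X i) - Y i) (Y i - q_hi (X i))`, and `Q_{1-α}` is the
`⌈(1-α)(m+1)⌉`-th smallest value among `E 1, …, E m` (equal to `+∞` when the rank exceeds `m`),
then `P(q_lo (X (m+1)) - Q_{1-α} ≤ Y (m+1) ≤ q_hi (X (m+1)) + Q_{1-α}) ≥ 1 - α`. -/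
theorem cqr_coverage_lower {Ω : Type*} [MeasurableSpace Ω]
    (μ : Measure Ω) [IsProbabilityMeasure μ] {m p : ℕ}
    (qlo qhi : (Fin p → ℝ) → ℝ) (hqlo : Measurable qlo) (hqhi : Measurable qhi)
    (X : Fin (m + 1) → Ω → (Fin p → ℝ)) (Y : Fin (m + 1) → Ω → ℝ)
    (hmeas : ∀ i, Measurable fun ω => (X i ω, Y i ω))
    (hexch : Exchangeable μ fun i ω => (X i ω, Y i ω))
    (α : ℝ) (hα : α ∈ Set.Ioo (0 : ℝ) 1)
    (E : Fin (m + 1) → Ω → ℝ)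
    (hE : E = fun i ω => max (qlo (X i ω) - Y i ω) (Y i ω - qhi (X i ω)))
    (Q : Ω → EReal)
    (hQ : Q = fun ω =>
      orderStatE (fun i : Fin m => E i.castSucc ω) ⌈(1 - α) * ((m : ℝ) + 1)⌉₊) :
    ENNReal.ofReal (1 - α) ≤
      μ {ω | (qlo (X (Fin.last m) ω) : EReal) - Q ω ≤ (Y (Fin.last m) ω : EReal) ∧
             (Y (Fin.last m) ω : EReal) ≤ (qhi (X (Fin.last m) ω) : EReal) + Q ω} := by
  classical
  obtain ⟨hα0, hα1⟩ := hα
  set k : ℕ := ⌈(1 - α) * ((m : ℝ) + 1)⌉₊ with hk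
  have hk1 : 1 ≤ k := Nat.ceil_pos.mpr (mul_pos (by linarith) (by positivity))
  have hkn : k ≤ m + 1 := by
    rw [hk, Nat.ceil_le]
    have : (1 - α) * ((m : ℝ) + 1) ≤ 1 * ((m : ℝ) + 1) := by
      apply mul_le_mul_of_nonneg_right (by linarith) (by positivity)
    push_cast
    linarith
  -- score function and random vectors
  set score : (Fin p → ℝ) × ℝ → ℝ := fun z => max (qlo z.1 - z.2) (z.2 - qhi z.1) with hscoredef
  have hscore : Measurable score :=
    ((hqlo.comp measurable_fst).sub measurable_snd).max
      (measurable_snd.sub (hqhi.comp measurable_fst))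
  set Z : Ω → Fin (m + 1) → (Fin p → ℝ) × ℝ := fun ω i => (X i ω, Y i ω) with hZdef
  have hZ : Measurable Z := measurable_pi_lambda _ (fun i => hmeas i)
  have hEZ : ∀ i ω, E i ω = score (Z ω i) := by intro i ω; rw [hE]
  -- events
  set B : Fin (m + 1) → Set (Fin (m + 1) → (Fin p → ℝ) × ℝ) := fun j =>
    {v | (Finset.univ.filter (fun i => score (v i) < score (v j))).card < k} with hBdef
  have hB : ∀ j, MeasurableSet (B j) := by
    intro j
    have hN : Measurable (fun v : Fin (m + 1) → (Fin p → ℝ) × ℝ =>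
        (Finset.univ.filter (fun i => score (v i) < score (v j))).card) := by
      simp only [Finset.card_filter]
      apply Finset.measurable_sum
      intro i _
      exact Measurable.ite
        (measurableSet_lt (hscore.comp (measurable_pi_apply i))
          (hscore.comp (measurable_pi_apply j))) measurable_const measurable_const
    have hBeq : B j = (fun v : Fin (m + 1) → (Fin p → ℝ) × ℝ =>
        (Finset.univ.filter (fun i => score (v i) < score (v j))).card) ⁻¹' Set.Iio k := rfl
    rw [hBeq]
    exact hN .of_discrete
  set A : Fin (m + 1) → Set Ω := fun j => Z ⁻¹' B j with hAdef
  have hA : ∀ j, MeasurableSet (A j) := fun j => hZ (hB j)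
  have hAmem : ∀ j ω, ω ∈ A j ↔
      (Finset.univ.filter (fun i => E i ω < E j ω)).card < k := by
    intro j ω
    simp only [hAdef, hBdef, Set.mem_preimage, Set.mem_setOf_eq, hEZ]
  -- all events have the same probability
  have hAeq : ∀ j, μ (A j) = μ (A (Fin.last m)) := by
    intro j
    obtain ⟨σ, hσ⟩ : ∃ σ' : Equiv.Perm (Fin (m + 1)), σ' = Equiv.swap j (Fin.last m) := ⟨_, rfl⟩
    have hσl : σ (Fin.last m) = j := by rw [hσ]; exact Equiv.swap_apply_right _ _
    have hcomp : Measurable (fun v : Fin (m + 1) → (Fin p → ℝ) × ℝ => v ∘ σ) :=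
      measurable_pi_lambda _ (fun i => measurable_pi_apply (σ i))
    have hswap : B j = (fun v : Fin (m + 1) → (Fin p → ℝ) × ℝ => v ∘ σ) ⁻¹' B (Fin.last m) := by
      ext v
      simp only [hBdef, Set.mem_preimage, Set.mem_setOf_eq, Function.comp_apply, hσl]
      exact (iff_of_eq (congrArg (fun c => c < k)
        (card_filter_comp_perm σ (fun i => score (v i) < score (v j))))).symm
    calc μ (A j) = Measure.map Z μ (B j) := (Measure.map_apply hZ (hB j)).symm
      _ = Measure.map Z μ ((fun v => v ∘ σ) ⁻¹' B (Fin.last m)) := by rw [← hswap]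
      _ = Measure.map (fun v => v ∘ σ) (Measure.map Z μ) (B (Fin.last m)) :=
          (Measure.map_apply hcomp (hB (Fin.last m))).symm
      _ = Measure.map ((fun v : Fin (m + 1) → (Fin p → ℝ) × ℝ => v ∘ σ) ∘ Z) μ
            (B (Fin.last m)) := by rw [Measure.map_map hcomp hZ]
      _ = Measure.map (fun ω (i : Fin (m + 1)) => (X (σ i) ω, Y (σ i) ω)) μ (B (Fin.last m)) :=
          rfl
      _ = Measure.map Z μ (B (Fin.last m)) := by rw [hexch σ]
      _ = μ (A (Fin.last m)) := Measure.map_apply hZ (hB (Fin.last m))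
  -- counting bound
  have hcount : (k : ENNReal) ≤ ((m + 1 : ℕ) : ENNReal) * μ (A (Fin.last m)) := by
    have hpt : ∀ ω, (k : ENNReal) ≤
        ∑ j : Fin (m + 1), (A j).indicator (fun _ => (1 : ENNReal)) ω := by
      intro ω
      have h1 : ∀ j : Fin (m + 1), (A j).indicator (fun _ => (1 : ENNReal)) ω =
          if (Finset.univ.filter (fun i => E i ω < E j ω)).card < k then 1 else 0 := by
        intro j
        rw [Set.indicator_apply]
        exact if_congr (hAmem j ω) rfl rfl
      simp only [h1]
      have h2 : ∑ j : Fin (m + 1),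
          (if (Finset.univ.filter (fun i => E i ω < E j ω)).card < k then (1 : ENNReal) else 0) =
          ((Finset.univ.filter (fun j : Fin (m + 1) =>
            (Finset.univ.filter (fun i => E i ω < E j ω)).card < k)).card : ENNReal) := by
        rw [Finset.card_filter]
        push_cast
        rfl
      rw [h2]
      exact_mod_cast count_small_rank (fun i => E i ω) k hkn
    calc (k : ENNReal) = ∫⁻ _, (k : ENNReal) ∂μ := by simp
      _ ≤ ∫⁻ ω, ∑ j : Fin (m + 1), (A j).indicator (fun _ => (1 : ENNReal)) ω ∂μ :=
          lintegral_mono hpt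
      _ = ∑ j : Fin (m + 1), ∫⁻ ω, (A j).indicator (fun _ => (1 : ENNReal)) ω ∂μ :=
          lintegral_finset_sum _ (fun j _ => (measurable_const.indicator (hA j)))
      _ = ∑ _j : Fin (m + 1), μ (A (Fin.last m)) := by
          refine Finset.sum_congr rfl (fun j _ => ?_)
          rw [← hAeq j, ← lintegral_indicator_one (hA j)]
          rfl
      _ = ((m + 1 : ℕ) : ENNReal) * μ (A (Fin.last m)) := by
          rw [Finset.sum_const, Finset.card_univ, Fintype.card_fin, nsmul_eq_mul]
  -- identify the coverage event with A (Fin.last m)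
  have hset : {ω | (qlo (X (Fin.last m) ω) : EReal) - Q ω ≤ (Y (Fin.last m) ω : EReal) ∧
      (Y (Fin.last m) ω : EReal) ≤ (qhi (X (Fin.last m) ω) : EReal) + Q ω} = A (Fin.last m) := by
    ext ω
    simp only [Set.mem_setOf_eq]
    rw [ereal_sub_le_iff, ereal_le_add_iff, ← max_le_iff,
      ← EReal.coe_strictMono.monotone.map_max, hAmem]
    have hc : max (qlo (X (Fin.last m) ω) - Y (Fin.last m) ω)
        (Y (Fin.last m) ω - qhi (X (Fin.last m) ω)) = E (Fin.last m) ω := by rw [hE]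
    rw [hc, hQ, le_orderStatE_iff _ k hk1]
    have hcards : (Finset.univ.filter
          (fun i : Fin m => E i.castSucc ω < E (Fin.last m) ω)).card =
        (Finset.univ.filter (fun i : Fin (m + 1) => E i ω < E (Fin.last m) ω)).card := by
      rw [Finset.card_filter, Finset.card_filter, Fin.sum_univ_castSucc]
      simp [lt_irrefl]
    rw [hcards]
  rw [hset]
  -- final arithmetic
  have hc0 : ((m + 1 : ℕ) : ENNReal) ≠ 0 := by exact_mod_cast Nat.succ_ne_zero m
  have hct : ((m + 1 : ℕ) : ENNReal) ≠ ⊤ := ENNReal.natCast_ne_top _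
  rw [← ENNReal.mul_le_mul_iff_left hc0 hct]
  calc ENNReal.ofReal (1 - α) * ((m + 1 : ℕ) : ENNReal)
      = ENNReal.ofReal ((1 - α) * ((m : ℝ) + 1)) := by
        rw [ENNReal.ofReal_mul (by linarith)]
        congr 1
        rw [← ENNReal.ofReal_natCast]
        congr 1
        push_cast
        ring
    _ ≤ (k : ENNReal) := by
        rw [← ENNReal.ofReal_natCast]
        exact ENNReal.ofReal_le_ofReal (Nat.le_ceil _)
    _ ≤ ((m + 1 : ℕ) : ENNReal) * μ (A (Fin.last m)) := hcount
    _ = μ (A (Fin.last m)) * ((m + 1 : ℕ) : ENNReal) := mul_comm _ _
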